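/- arXiv:2405.06935 — 2 statements merged into one kernel-verified Lean document; each statement's English description precedes it below -/
import Mathlib

section
/- Let p be an odd prime, n ≥ 2, and A = F_p[y₁,…,y_n] ⊗ Λ(x₁,…,x_n). For each j ≥ 0 let Q_j be the graded derivation with Q_j(x_i) = y_i^{p^j} and Q_j(y_i) = 0. Then for any s with 2 ≤ s ≤ n and any indices 0 < i₁ < ⋯ < i_{s−2}, the element Q_{i₁} ∘ ⋯ ∘ Q_{i_{s−2}} ∘ Q₀ (x₁ x₂ ⋯ x_s) is nonzero; indeed it contains the monomial term ± y₁^{p^{i₁}} ⋯ y_{s−2}^{p^{i_{s−2}}} · y_{s−1} · x_s with coefficient ±1. -/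
set_option synthInstance.maxHeartbeats 1000000
set_option maxHeartbeats 1000000

open TensorProduct

/-- `A = F_p[y₁,…,yₙ] ⊗ Λ(x₁,…,xₙ)`, the mod-p cohomology of `B(ℤ/p)ⁿ` (p odd). -/
noncomputable abbrev PolyTensorExtN (p n : ℕ) :=
  TensorProduct (ZMod p) (MvPolynomial (Fin n) (ZMod p))
    (ExteriorAlgebra (ZMod p) (Fin n → ZMod p))

namespace MilnorQAux

variable {p n : ℕ}
  (x y : Fin n → PolyTensorExtN p n)
  (ε : PolyTensorExtN p n →ₐ[ZMod p] PolyTensorExtN p n)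
  (Q : ℕ → (PolyTensorExtN p n →ₗ[ZMod p] PolyTensorExtN p n))

/-- product of x's over a list of indices -/
noncomputable def xprod (l : List (Fin n)) : PolyTensorExtN p n := (l.map x).prod

@[simp] lemma xprod_nil : xprod x ([] : List (Fin n)) = 1 := rfl

lemma xprod_cons (v : Fin n) (l : List (Fin n)) :
    xprod x (v :: l) = x v * xprod x l := by
  simp [xprod]

/-- iterated Q operator -/
noncomputable def applyQ (js : List ℕ) :
    PolyTensorExtN p n →ₗ[ZMod p] PolyTensorExtN p n :=
  (js.map Q).prod

@[simp] lemma applyQ_nil (a : PolyTensorExtN p n) : applyQ Q [] a = a := rfl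

lemma applyQ_cons (j : ℕ) (js : List ℕ) (a : PolyTensorExtN p n) :
    applyQ Q (j :: js) a = Q j (applyQ Q js a) := by
  simp [applyQ, List.prod_cons, Module.End.mul_apply]

lemma eps_tmul_one
    (hε : ε = Algebra.TensorProduct.map (AlgHom.id (ZMod p) (MvPolynomial (Fin n) (ZMod p)))
      (ExteriorAlgebra.map (-(LinearMap.id (R := ZMod p) (M := Fin n → ZMod p)))))
    (f : MvPolynomial (Fin n) (ZMod p)) :
    ε (f ⊗ₜ 1) = f ⊗ₜ 1 := by
  subst hε
  simp [Algebra.TensorProduct.map_tmul]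

lemma eps_x
    (hx : ∀ i, x i = 1 ⊗ₜ ExteriorAlgebra.ι (ZMod p) (Pi.single i (1 : ZMod p)))
    (hε : ε = Algebra.TensorProduct.map (AlgHom.id (ZMod p) (MvPolynomial (Fin n) (ZMod p)))
      (ExteriorAlgebra.map (-(LinearMap.id (R := ZMod p) (M := Fin n → ZMod p)))))
    (i : Fin n) : ε (x i) = - x i := by
  subst hε
  rw [hx]
  simp only [Algebra.TensorProduct.map_tmul, AlgHom.coe_id, id_eq,
    ExteriorAlgebra.map_apply_ι]
  rw [show ((-(LinearMap.id (R := ZMod p) (M := Fin n → ZMod p)))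
      (Pi.single i (1 : ZMod p))) = -(Pi.single i 1) from rfl]
  rw [map_neg, TensorProduct.tmul_neg]

lemma Q_one
    (hQmul : ∀ j, ∀ a b, Q j (a * b) = Q j a * b + ε a * Q j b)
    (j : ℕ) : Q j (1 : PolyTensorExtN p n) = 0 := by
  have h := hQmul j 1 1
  simp only [mul_one, one_mul, map_one] at h
  exact (add_eq_left.mp h.symm)

lemma Q_tmul_one
    (hy : ∀ i, y i = (MvPolynomial.X i) ⊗ₜ 1)
    (hε : ε = Algebra.TensorProduct.map (AlgHom.id (ZMod p) (MvPolynomial (Fin n) (ZMod p)))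
      (ExteriorAlgebra.map (-(LinearMap.id (R := ZMod p) (M := Fin n → ZMod p)))))
    (hQy : ∀ j i, Q j (y i) = 0)
    (hQmul : ∀ j, ∀ a b, Q j (a * b) = Q j a * b + ε a * Q j b)
    (j : ℕ) (f : MvPolynomial (Fin n) (ZMod p)) :
    Q j (f ⊗ₜ 1) = 0 := by
  induction f using MvPolynomial.induction_on with
  | C a =>
      have : ((MvPolynomial.C a : MvPolynomial (Fin n) (ZMod p)) ⊗ₜ
          (1 : ExteriorAlgebra (ZMod p) (Fin n → ZMod p))) =
          a • (1 : PolyTensorExtN p n) := by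
        rw [Algebra.TensorProduct.one_def, TensorProduct.smul_tmul']
        congr 1
        rw [MvPolynomial.C_eq_smul_one]
      rw [this, map_smul, Q_one ε Q hQmul, smul_zero]
  | add f g hf hg =>
      rw [TensorProduct.add_tmul, map_add, hf, hg, add_zero]
  | mul_X f i hf =>
      have : ((f * MvPolynomial.X i) ⊗ₜ (1 : ExteriorAlgebra (ZMod p) (Fin n → ZMod p))) =
          ((f ⊗ₜ 1 : PolyTensorExtN p n) * ((MvPolynomial.X i) ⊗ₜ 1 : PolyTensorExtN p n)) := by
        rw [Algebra.TensorProduct.tmul_mul_tmul, one_mul]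
      rw [this, hQmul, hf, zero_mul, ← hy, hQy, mul_zero, add_zero]

lemma Q_tmul_one_mul
    (hy : ∀ i, y i = (MvPolynomial.X i) ⊗ₜ 1)
    (hε : ε = Algebra.TensorProduct.map (AlgHom.id (ZMod p) (MvPolynomial (Fin n) (ZMod p)))
      (ExteriorAlgebra.map (-(LinearMap.id (R := ZMod p) (M := Fin n → ZMod p)))))
    (hQy : ∀ j i, Q j (y i) = 0)
    (hQmul : ∀ j, ∀ a b, Q j (a * b) = Q j a * b + ε a * Q j b)
    (j : ℕ) (f : MvPolynomial (Fin n) (ZMod p)) (b : PolyTensorExtN p n) :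
    Q j ((f ⊗ₜ 1) * b) = (f ⊗ₜ 1) * Q j b := by
  rw [hQmul, Q_tmul_one y ε Q hy hε hQy hQmul, zero_mul, zero_add,
    eps_tmul_one ε hε]

lemma Q_x_mul
    (hx : ∀ i, x i = 1 ⊗ₜ ExteriorAlgebra.ι (ZMod p) (Pi.single i (1 : ZMod p)))
    (hε : ε = Algebra.TensorProduct.map (AlgHom.id (ZMod p) (MvPolynomial (Fin n) (ZMod p)))
      (ExteriorAlgebra.map (-(LinearMap.id (R := ZMod p) (M := Fin n → ZMod p)))))
    (hQx : ∀ j i, Q j (x i) = (y i) ^ (p ^ j))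
    (hQmul : ∀ j, ∀ a b, Q j (a * b) = Q j a * b + ε a * Q j b)
    (j : ℕ) (v : Fin n) (b : PolyTensorExtN p n) :
    Q j (x v * b) = (y v) ^ (p ^ j) * b - x v * Q j b := by
  rw [hQmul, hQx, eps_x x ε hx hε]
  rw [sub_eq_add_neg]
  congr 1
  exact neg_mul (x v) ((Q j) b)


lemma y_pow_eq (hy : ∀ i, y i = (MvPolynomial.X i) ⊗ₜ 1) (v : Fin n) (e : ℕ) :
    (y v) ^ e = (MvPolynomial.X v ^ e) ⊗ₜ 1 := by
  rw [hy, Algebra.TensorProduct.tmul_pow, one_pow]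

lemma Q_ypow_mul
    (hy : ∀ i, y i = (MvPolynomial.X i) ⊗ₜ 1)
    (hε : ε = Algebra.TensorProduct.map (AlgHom.id (ZMod p) (MvPolynomial (Fin n) (ZMod p)))
      (ExteriorAlgebra.map (-(LinearMap.id (R := ZMod p) (M := Fin n → ZMod p)))))
    (hQy : ∀ j i, Q j (y i) = 0)
    (hQmul : ∀ j, ∀ a b, Q j (a * b) = Q j a * b + ε a * Q j b)
    (j : ℕ) (v : Fin n) (e : ℕ) (u : PolyTensorExtN p n) :
    Q j ((y v) ^ e * u) = (y v) ^ e * Q j u := by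
  rw [y_pow_eq y hy, Q_tmul_one_mul y ε Q hy hε hQy hQmul]

lemma applyQ_x_mul
    (hx : ∀ i, x i = 1 ⊗ₜ ExteriorAlgebra.ι (ZMod p) (Pi.single i (1 : ZMod p)))
    (hy : ∀ i, y i = (MvPolynomial.X i) ⊗ₜ 1)
    (hε : ε = Algebra.TensorProduct.map (AlgHom.id (ZMod p) (MvPolynomial (Fin n) (ZMod p)))
      (ExteriorAlgebra.map (-(LinearMap.id (R := ZMod p) (M := Fin n → ZMod p)))))
    (hQx : ∀ j i, Q j (x i) = (y i) ^ (p ^ j))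
    (hQy : ∀ j i, Q j (y i) = 0)
    (hQmul : ∀ j, ∀ a b, Q j (a * b) = Q j a * b + ε a * Q j b)
    (js : List ℕ) (v : Fin n) (w : PolyTensorExtN p n) :
    applyQ Q js (x v * w) =
      (∑ t ∈ Finset.range js.length, ((-1 : ZMod p) ^ (js.length - 1 - t)) •
        ((y v) ^ (p ^ (js.getD t 0)) * applyQ Q (js.eraseIdx t) w))
      + ((-1 : ZMod p) ^ js.length) • (x v * applyQ Q js w) := by
  induction js generalizing w with
  | nil => simp
  | cons j js' ih =>
      rw [applyQ_cons, ih, map_add, map_sum]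
      simp only [map_smul]
      rw [Q_x_mul x y ε Q hx hε hQx hQmul, smul_sub]
      have h0 : ∀ t ∈ Finset.range js'.length,
          ((-1 : ZMod p) ^ (js'.length - 1 - t)) •
            Q j ((y v) ^ (p ^ (js'.getD t 0)) * applyQ Q (js'.eraseIdx t) w) =
          ((-1 : ZMod p) ^ (js'.length - 1 - t)) •
            ((y v) ^ (p ^ (js'.getD t 0)) * applyQ Q (j :: js'.eraseIdx t) w) := by
        intro t _
        rw [Q_ypow_mul y ε Q hy hε hQy hQmul, applyQ_cons]
      rw [Finset.sum_congr rfl h0]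
      rw [show (j :: js').length = js'.length + 1 from rfl, Finset.sum_range_succ']
      have hterm : ∀ t ∈ Finset.range js'.length,
          ((-1 : ZMod p) ^ (js'.length + 1 - 1 - (t + 1))) •
            ((y v) ^ (p ^ ((j :: js').getD (t + 1) 0)) *
              applyQ Q ((j :: js').eraseIdx (t + 1)) w)
          = ((-1 : ZMod p) ^ (js'.length - 1 - t)) •
            ((y v) ^ (p ^ (js'.getD t 0)) * applyQ Q (j :: js'.eraseIdx t) w) := by
        intro t _
        have h1 : js'.length + 1 - 1 - (t + 1) = js'.length - 1 - t := by omega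
        have h2 : (j :: js').getD (t + 1) 0 = js'.getD t 0 := rfl
        have h3 : (j :: js').eraseIdx (t + 1) = j :: js'.eraseIdx t := rfl
        rw [h1, h2, h3]
      rw [Finset.sum_congr rfl hterm]
      have hz : (j :: js').getD 0 0 = j := rfl
      have he : (j :: js').eraseIdx 0 = js' := rfl
      rw [hz, he]
      have hx2 : ((-1 : ZMod p) ^ (js'.length + 1)) • (x v * applyQ Q (j :: js') w)
          = -(((-1 : ZMod p) ^ js'.length) • (x v * Q j (applyQ Q js' w))) := by
        rw [applyQ_cons, pow_succ, mul_neg_one]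
        exact neg_smul ((-1 : ZMod p) ^ js'.length) (x v * Q j (applyQ Q js' w))
      rw [hx2]
      have hs0 : js'.length + 1 - 1 - 0 = js'.length := by omega
      rw [hs0]
      abel

lemma applyQ_one
    (hQmul : ∀ j, ∀ a b, Q j (a * b) = Q j a * b + ε a * Q j b)
    (js : List ℕ) (hjs : js ≠ []) : applyQ Q js (1 : PolyTensorExtN p n) = 0 := by
  induction js with
  | nil => exact absurd rfl hjs
  | cons j js' ih =>
      rw [applyQ_cons]
      rcases eq_or_ne js' [] with h | h
      · subst h; rw [applyQ_nil, Q_one ε Q hQmul]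
      · rw [ih h, map_zero]

lemma applyQ_xprod_eq_zero
    (hx : ∀ i, x i = 1 ⊗ₜ ExteriorAlgebra.ι (ZMod p) (Pi.single i (1 : ZMod p)))
    (hy : ∀ i, y i = (MvPolynomial.X i) ⊗ₜ 1)
    (hε : ε = Algebra.TensorProduct.map (AlgHom.id (ZMod p) (MvPolynomial (Fin n) (ZMod p)))
      (ExteriorAlgebra.map (-(LinearMap.id (R := ZMod p) (M := Fin n → ZMod p)))))
    (hQx : ∀ j i, Q j (x i) = (y i) ^ (p ^ j))
    (hQy : ∀ j i, Q j (y i) = 0)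
    (hQmul : ∀ j, ∀ a b, Q j (a * b) = Q j a * b + ε a * Q j b)
    (l : List (Fin n)) :
    ∀ js : List ℕ, l.length < js.length → applyQ Q js (xprod x l) = 0 := by
  induction l with
  | nil =>
      intro js h
      rw [xprod_nil]
      exact applyQ_one ε Q hQmul js (by rintro rfl; simp at h)
  | cons v l'' ih =>
      intro js h
      rw [xprod_cons, applyQ_x_mul x y ε Q hx hy hε hQx hQy hQmul]
      have h1 : ∀ t ∈ Finset.range js.length,
          ((-1 : ZMod p) ^ (js.length - 1 - t)) •
            ((y v) ^ (p ^ (js.getD t 0)) * applyQ Q (js.eraseIdx t) (xprod x l''))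
          = 0 := by
        intro t ht
        rw [ih (js.eraseIdx t) ?_, mul_zero, smul_zero]
        have := List.length_eraseIdx_add_one (Finset.mem_range.mp ht)
        simp only [List.length_cons] at h
        omega
      rw [Finset.sum_congr rfl h1, Finset.sum_const_zero, zero_add,
        ih js (by simp only [List.length_cons] at h; omega), mul_zero, smul_zero]

/-- terms `(f ⊗ 1) * x_{l'}` with variables constrained to `l` and `|l'| = r`. -/
noncomputable def good (l : List (Fin n)) (r : ℕ) : Submodule (ZMod p) (PolyTensorExtN p n) :=
  Submodule.span (ZMod p)
    { a | ∃ f : MvPolynomial (Fin n) (ZMod p), ∃ l' : List (Fin n),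
        (∀ v ∈ f.vars, v ∈ l) ∧ (∀ v ∈ l', v ∈ l) ∧ l'.length = r ∧
        a = (f ⊗ₜ 1) * xprod x l' }

lemma x_comm_tmul
    (hx : ∀ i, x i = 1 ⊗ₜ ExteriorAlgebra.ι (ZMod p) (Pi.single i (1 : ZMod p)))
    (v : Fin n) (f : MvPolynomial (Fin n) (ZMod p)) :
    x v * ((f ⊗ₜ 1 : PolyTensorExtN p n)) = (f ⊗ₜ 1 : PolyTensorExtN p n) * x v := by
  rw [hx, Algebra.TensorProduct.tmul_mul_tmul, Algebra.TensorProduct.tmul_mul_tmul,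
    one_mul, mul_one, one_mul, mul_one]

lemma ypow_mul_good (hp : 1 < p)
    (hy : ∀ i, y i = (MvPolynomial.X i) ⊗ₜ 1)
    (v : Fin n) (e : ℕ) (l : List (Fin n)) (r : ℕ) (a : PolyTensorExtN p n)
    (ha : a ∈ good x l r) :
    (y v) ^ e * a ∈ good x (v :: l) r := by
  induction ha using Submodule.span_induction with
  | mem b hb =>
      obtain ⟨f, l', hf, hl', hr, rfl⟩ := hb
      apply Submodule.subset_span
      refine ⟨MvPolynomial.X v ^ e * f, l', ?_, fun u hu => List.mem_cons_of_mem _ (hl' u hu),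
        hr, ?_⟩
      · haveI : Fact (1 < p) := ⟨hp⟩
        intro u hu
        rcases Finset.mem_union.mp (MvPolynomial.vars_mul _ _ hu) with h | h
        · have := MvPolynomial.vars_pow (MvPolynomial.X v) e h
          rw [MvPolynomial.vars_X] at this
          rw [Finset.mem_singleton] at this
          exact this ▸ (List.mem_cons_self : v ∈ v :: l)
        · exact List.mem_cons_of_mem _ (hf u h)
      · rw [← mul_assoc, y_pow_eq y hy, Algebra.TensorProduct.tmul_mul_tmul, one_mul,
          mul_comm (MvPolynomial.X v ^ e) f]
  | zero => rw [mul_zero]; exact Submodule.zero_mem _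
  | add b c _ _ hb hc => rw [mul_add]; exact Submodule.add_mem _ hb hc
  | smul c b _ hb =>
      rw [mul_smul_comm]; exact Submodule.smul_mem _ c hb

lemma x_mul_good
    (hx : ∀ i, x i = 1 ⊗ₜ ExteriorAlgebra.ι (ZMod p) (Pi.single i (1 : ZMod p)))
    (v : Fin n) (l : List (Fin n)) (r : ℕ) (a : PolyTensorExtN p n)
    (ha : a ∈ good x l r) :
    x v * a ∈ good x (v :: l) (r + 1) := by
  induction ha using Submodule.span_induction with
  | mem b hb =>
      obtain ⟨f, l', hf, hl', hr, rfl⟩ := hb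
      apply Submodule.subset_span
      refine ⟨f, v :: l', fun u hu => List.mem_cons_of_mem _ (hf u hu), ?_, by simp [hr], ?_⟩
      · intro u hu
        rcases List.mem_cons.mp hu with h | h
        · exact h ▸ (List.mem_cons_self : v ∈ v :: l)
        · exact List.mem_cons_of_mem _ (hl' u h)
      · rw [xprod_cons, ← mul_assoc, x_comm_tmul x hx, mul_assoc]
  | zero => rw [mul_zero]; exact Submodule.zero_mem _
  | add b c _ _ hb hc => rw [mul_add]; exact Submodule.add_mem _ hb hc
  | smul c b _ hb => rw [mul_smul_comm]; exact Submodule.smul_mem _ c hb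

lemma one_mem_good (l : List (Fin n)) : (1 : PolyTensorExtN p n) ∈ good x l 0 := by
  apply Submodule.subset_span
  refine ⟨1, [], by simp [MvPolynomial.vars_one], by simp, rfl, ?_⟩
  rw [xprod_nil, mul_one, Algebra.TensorProduct.one_def]

lemma applyQ_xprod_mem_good (hp : 1 < p)
    (hx : ∀ i, x i = 1 ⊗ₜ ExteriorAlgebra.ι (ZMod p) (Pi.single i (1 : ZMod p)))
    (hy : ∀ i, y i = (MvPolynomial.X i) ⊗ₜ 1)
    (hε : ε = Algebra.TensorProduct.map (AlgHom.id (ZMod p) (MvPolynomial (Fin n) (ZMod p)))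
      (ExteriorAlgebra.map (-(LinearMap.id (R := ZMod p) (M := Fin n → ZMod p)))))
    (hQx : ∀ j i, Q j (x i) = (y i) ^ (p ^ j))
    (hQy : ∀ j i, Q j (y i) = 0)
    (hQmul : ∀ j, ∀ a b, Q j (a * b) = Q j a * b + ε a * Q j b)
    (l : List (Fin n)) :
    ∀ js : List ℕ, js.length ≤ l.length →
      applyQ Q js (xprod x l) ∈ good x l (l.length - js.length) := by
  induction l with
  | nil =>
      intro js h
      have : js = [] := List.eq_nil_of_length_eq_zero (by simpa using h)
      subst this
      simpa using one_mem_good x []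
  | cons v l'' ih =>
      intro js h
      rw [xprod_cons, applyQ_x_mul x y ε Q hx hy hε hQx hQy hQmul]
      apply Submodule.add_mem
      · apply Submodule.sum_mem
        intro t ht
        apply Submodule.smul_mem
        have ht' : t < js.length := Finset.mem_range.mp ht
        have hlen : (js.eraseIdx t).length = js.length - 1 := by
          have := List.length_eraseIdx_add_one ht'
          omega
        have hm := ih (js.eraseIdx t) (by simp only [List.length_cons] at h; omega)
        rw [hlen] at hm
        have := ypow_mul_good x y hp hy v (p ^ js.getD t 0) l''
          (l''.length - (js.length - 1)) _ hm
        have heq : l''.length - (js.length - 1) = (v :: l'').length - js.length := by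
          simp only [List.length_cons] at h ⊢; omega
        rwa [heq] at this
      · apply Submodule.smul_mem
        simp only [List.length_cons] at h
        rcases Nat.lt_or_ge js.length (l''.length + 1) with hlt | hge
        · have hm := ih js (by omega)
          have := x_mul_good x hx v l'' (l''.length - js.length) _ hm
          have heq : l''.length - js.length + 1 = (v :: l'').length - js.length := by
            simp only [List.length_cons]; omega
          rwa [heq] at this
        · have : js.length = l''.length + 1 := by omega
          rw [applyQ_xprod_eq_zero x y ε Q hx hy hε hQx hQy hQmul l'' js (by omega),
            mul_zero]
          exact Submodule.zero_mem _

/-- extract the coefficient of monomial `μ` in the `x_w`-component -/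
noncomputable def phi (μ : (Fin n) →₀ ℕ) (w : Fin n) :
    PolyTensorExtN p n →ₗ[ZMod p] ZMod p :=
  (MvPolynomial.lcoeff (ZMod p) μ) ∘ₗ
    (TensorProduct.rid (ZMod p) (MvPolynomial (Fin n) (ZMod p))).toLinearMap ∘ₗ
    (TensorProduct.map LinearMap.id (LinearMap.proj w)) ∘ₗ
    (TensorProduct.map LinearMap.id ExteriorAlgebra.ιInv)

lemma phi_apply (μ : (Fin n) →₀ ℕ) (w : Fin n) (a : PolyTensorExtN p n) :
    phi μ w a = MvPolynomial.coeff μ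
      ((TensorProduct.rid (ZMod p) (MvPolynomial (Fin n) (ZMod p)))
        ((TensorProduct.map LinearMap.id (LinearMap.proj w))
          ((TensorProduct.map LinearMap.id ExteriorAlgebra.ιInv) a))) := rfl

lemma iotaInv_one : ExteriorAlgebra.ιInv (1 : ExteriorAlgebra (ZMod p) (Fin n → ZMod p)) = 0 := by
  simpa using LinearMap.congr_fun (ExteriorAlgebra.ιInv_comp_map (0 : (Fin n → ZMod p) →ₗ[ZMod p] (Fin n → ZMod p))) 1

lemma phi_tmul_one (μ : (Fin n) →₀ ℕ) (w : Fin n) (f : MvPolynomial (Fin n) (ZMod p)) :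
    phi μ w ((f ⊗ₜ 1 : PolyTensorExtN p n)) = 0 := by
  rw [phi_apply, TensorProduct.map_tmul, iotaInv_one, TensorProduct.tmul_zero]
  simp

lemma phi_tmul_x
    (hx : ∀ i, x i = 1 ⊗ₜ ExteriorAlgebra.ι (ZMod p) (Pi.single i (1 : ZMod p)))
    (μ : (Fin n) →₀ ℕ) (w u : Fin n) (f : MvPolynomial (Fin n) (ZMod p)) :
    phi μ w ((f ⊗ₜ 1 : PolyTensorExtN p n) * x u) =
      (Pi.single (M := fun _ : Fin n => ZMod p) u 1 w) * MvPolynomial.coeff μ f := by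
  rw [hx]
  have : (f ⊗ₜ 1 : PolyTensorExtN p n) *
      (1 ⊗ₜ ExteriorAlgebra.ι (ZMod p) (Pi.single u (1 : ZMod p))) =
      f ⊗ₜ ExteriorAlgebra.ι (ZMod p) (Pi.single u (1 : ZMod p)) := by
    rw [Algebra.TensorProduct.tmul_mul_tmul, mul_one, one_mul]
  rw [this, phi_apply, TensorProduct.map_tmul]
  rw [show (LinearMap.id : MvPolynomial (Fin n) (ZMod p) →ₗ[ZMod p] _) f = f from rfl]
  rw [ExteriorAlgebra.ι_leftInverse (Pi.single u 1), TensorProduct.map_tmul,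
    TensorProduct.rid_tmul]
  rw [show (LinearMap.proj w : (Fin n → ZMod p) →ₗ[ZMod p] ZMod p) (Pi.single u 1)
      = Pi.single (M := fun _ : Fin n => ZMod p) u 1 w from rfl]
  rw [MvPolynomial.coeff_smul, smul_eq_mul]
  rfl

lemma coeff_eq_zero_of_var (f : MvPolynomial (Fin n) (ZMod p)) (v : Fin n)
    (hv : v ∉ f.vars) (d : (Fin n) →₀ ℕ) (hd : d v ≠ 0) :
    MvPolynomial.coeff d f = 0 := by
  by_contra h
  exact hv ((MvPolynomial.mem_vars v).mpr
    ⟨d, MvPolynomial.mem_support_iff.mpr h, Finsupp.mem_support_iff.mpr hd⟩)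

/-- goodness at `r = 1` turns terms into `(f ⊗ 1) * x u` shape -/
lemma phi_ypow_mul_good_eq_zero
    (hx : ∀ i, x i = 1 ⊗ₜ ExteriorAlgebra.ι (ZMod p) (Pi.single i (1 : ZMod p)))
    (hy : ∀ i, y i = (MvPolynomial.X i) ⊗ₜ 1)
    (μ : (Fin n) →₀ ℕ) (w v : Fin n) (e : ℕ) (l : List (Fin n))
    (hv : v ∉ l) (hμ : μ v ≠ e)
    (a : PolyTensorExtN p n) (ha : a ∈ good x l 1) :
    phi μ w ((y v) ^ e * a) = 0 := by
  induction ha using Submodule.span_induction with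
  | mem b hb =>
      obtain ⟨f, l', hf, hl', hr, rfl⟩ := hb
      obtain ⟨u, rfl⟩ : ∃ u, l' = [u] := by
        match l', hr with
        | [u], _ => exact ⟨u, rfl⟩
      have hxp : xprod x [u] = x u := by rw [xprod_cons, xprod_nil, mul_one]
      rw [hxp, ← mul_assoc, y_pow_eq y hy, Algebra.TensorProduct.tmul_mul_tmul, one_mul,
        phi_tmul_x x hx]
      have : MvPolynomial.coeff μ (MvPolynomial.X v ^ e * f) = 0 := by
        rw [MvPolynomial.X_pow_eq_monomial, MvPolynomial.coeff_monomial_mul']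
        split_ifs with hle
        · rw [coeff_eq_zero_of_var f v (fun hm => hv (hf v hm)) _ ?_, mul_zero]
          have h1 : Finsupp.single v e v = e := by simp
          have h2 : (Finsupp.single v e) ≤ μ := hle
          have h3 : e ≤ μ v := by simpa using Finsupp.le_def.mp h2 v
          simp only [Finsupp.tsub_apply, h1]
          omega
        · rfl
      rw [this, mul_zero]
  | zero => rw [mul_zero, map_zero]
  | add b c _ _ hb hc => rw [mul_add, map_add, hb, hc, add_zero]
  | smul c b _ hb => rw [mul_smul_comm, map_smul, hb, smul_zero]

lemma phi_ypow_mul_good_peel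
    (hx : ∀ i, x i = 1 ⊗ₜ ExteriorAlgebra.ι (ZMod p) (Pi.single i (1 : ZMod p)))
    (hy : ∀ i, y i = (MvPolynomial.X i) ⊗ₜ 1)
    (μ' : (Fin n) →₀ ℕ) (w v : Fin n) (e : ℕ) (l : List (Fin n))
    (a : PolyTensorExtN p n) (ha : a ∈ good x l 1) :
    phi (Finsupp.single v e + μ') w ((y v) ^ e * a) = phi μ' w a := by
  induction ha using Submodule.span_induction with
  | mem b hb =>
      obtain ⟨f, l', hf, hl', hr, rfl⟩ := hb
      obtain ⟨u, rfl⟩ : ∃ u, l' = [u] := by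
        match l', hr with
        | [u], _ => exact ⟨u, rfl⟩
      have hxp : xprod x [u] = x u := by rw [xprod_cons, xprod_nil, mul_one]
      rw [hxp, ← mul_assoc, y_pow_eq y hy, Algebra.TensorProduct.tmul_mul_tmul, one_mul,
        phi_tmul_x x hx, phi_tmul_x x hx]
      rw [MvPolynomial.X_pow_eq_monomial, MvPolynomial.coeff_monomial_mul, one_mul]
  | zero => rw [mul_zero, map_zero, map_zero]
  | add b c _ _ hb hc => rw [mul_add, map_add, map_add, hb, hc]
  | smul c b _ hb => rw [mul_smul_comm, map_smul, map_smul, hb]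

lemma phi_x_mul_good_eq_zero
    (hx : ∀ i, x i = 1 ⊗ₜ ExteriorAlgebra.ι (ZMod p) (Pi.single i (1 : ZMod p)))
    (μ : (Fin n) →₀ ℕ) (w v : Fin n) (hvw : v ≠ w) (l : List (Fin n))
    (a : PolyTensorExtN p n) (ha : a ∈ good x l 0) :
    phi μ w (x v * a) = 0 := by
  induction ha using Submodule.span_induction with
  | mem b hb =>
      obtain ⟨f, l', hf, hl', hr, rfl⟩ := hb
      obtain rfl : l' = [] := List.eq_nil_of_length_eq_zero hr
      rw [xprod_nil, mul_one, x_comm_tmul x hx, phi_tmul_x x hx,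
        Pi.single_eq_of_ne' hvw, zero_mul]
  | zero => rw [mul_zero, map_zero]
  | add b c _ _ hb hc => rw [mul_add, map_add, hb, hc, add_zero]
  | smul c b _ hb => rw [mul_smul_comm, map_smul, hb, smul_zero]

/-- the target monomial built from paired lists -/
noncomputable def muzip (p : ℕ) {n : ℕ} (vs : List (Fin n)) (js : List ℕ) : (Fin n) →₀ ℕ :=
  (List.zipWith (fun v j => Finsupp.single v (p ^ j)) vs js).sum

lemma muzip_cons (p : ℕ) {n : ℕ} (v : Fin n) (vs : List (Fin n)) (j : ℕ) (js : List ℕ) :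
    muzip p (v :: vs) (j :: js) = Finsupp.single v (p ^ j) + muzip p vs js := by
  simp [muzip]

lemma muzip_apply_eq_zero (p : ℕ) {n : ℕ} (vs : List (Fin n)) (js : List ℕ)
    (v : Fin n) (hv : v ∉ vs) : (muzip p vs js) v = 0 := by
  induction vs generalizing js with
  | nil => simp [muzip]
  | cons u vs' ih =>
      cases js with
      | nil => simp [muzip]
      | cons j js' =>
          rw [muzip_cons, Finsupp.add_apply, ih js' (fun h => hv (List.mem_cons_of_mem _ h)),
            add_zero, Finsupp.single_apply_eq_zero]
          intro h
          exact absurd (h ▸ (List.mem_cons_self : u ∈ u :: vs')) hv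

lemma main_lemma (hp : 1 < p)
    (hx : ∀ i, x i = 1 ⊗ₜ ExteriorAlgebra.ι (ZMod p) (Pi.single i (1 : ZMod p)))
    (hy : ∀ i, y i = (MvPolynomial.X i) ⊗ₜ 1)
    (hε : ε = Algebra.TensorProduct.map (AlgHom.id (ZMod p) (MvPolynomial (Fin n) (ZMod p)))
      (ExteriorAlgebra.map (-(LinearMap.id (R := ZMod p) (M := Fin n → ZMod p)))))
    (hQx : ∀ j i, Q j (x i) = (y i) ^ (p ^ j))
    (hQy : ∀ j i, Q j (y i) = 0)
    (hQmul : ∀ j, ∀ a b, Q j (a * b) = Q j a * b + ε a * Q j b) :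
    ∀ (js : List ℕ) (vs : List (Fin n)) (w : Fin n),
      vs.length = js.length → js.Nodup → (vs ++ [w]).Nodup →
      phi (muzip p vs js) w (applyQ Q js (xprod x (vs ++ [w]))) = 1 ∨
      phi (muzip p vs js) w (applyQ Q js (xprod x (vs ++ [w]))) = -1 := by
  intro js
  induction js with
  | nil =>
      intro vs w hlen _ _
      obtain rfl : vs = [] := List.eq_nil_of_length_eq_zero hlen
      left
      have h1 : xprod x (([] : List (Fin n)) ++ [w]) = (1 ⊗ₜ 1 : PolyTensorExtN p n) * x w := by
        rw [← Algebra.TensorProduct.one_def, one_mul]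
        rw [show (([] : List (Fin n)) ++ [w]) = [w] from rfl, xprod_cons, xprod_nil, mul_one]
      rw [applyQ_nil, h1, phi_tmul_x x hx]
      have h2 : muzip p ([] : List (Fin n)) [] = 0 := rfl
      rw [h2, Pi.single_eq_same]
      simp
  | cons j js' ih =>
      intro vs w hlen hnd hnd2
      obtain ⟨v, vs', rfl⟩ : ∃ v vs', vs = v :: vs' := by
        cases vs with
        | nil => simp at hlen
        | cons a l => exact ⟨a, l, rfl⟩
      simp only [List.length_cons, Nat.add_right_cancel_iff] at hlen
      have hndc : v ∉ (vs' ++ [w]) ∧ (vs' ++ [w]).Nodup := by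
        rw [List.cons_append, List.nodup_cons] at hnd2
        exact hnd2
      have hjnd : j ∉ js' ∧ js'.Nodup := by
        rw [List.nodup_cons] at hnd
        exact hnd
      have hvw : v ≠ w := by
        intro h
        apply hndc.1
        rw [h]
        exact List.mem_append_right vs' (List.mem_singleton_self w)
      have hvvs' : v ∉ vs' := fun h => hndc.1 (List.mem_append_left _ h)
      have hlw : (vs' ++ [w]).length = js'.length + 1 := by
        simp [hlen]
      have hgood1 : applyQ Q js' (xprod x (vs' ++ [w])) ∈ good x (vs' ++ [w]) 1 := by
        have := applyQ_xprod_mem_good x y ε Q hp hx hy hε hQx hQy hQmul (vs' ++ [w]) js'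
          (by omega)
        rwa [hlw, Nat.add_sub_cancel_left] at this
      have hgood0 : applyQ Q (j :: js') (xprod x (vs' ++ [w])) ∈ good x (vs' ++ [w]) 0 := by
        have := applyQ_xprod_mem_good x y ε Q hp hx hy hε hQx hQy hQmul (vs' ++ [w]) (j :: js')
          (by simp [hlw])
        rwa [hlw, show (j :: js').length = js'.length + 1 from rfl, Nat.sub_self] at this
      have hmu : muzip p (v :: vs') (j :: js') = Finsupp.single v (p ^ j) + muzip p vs' js' :=
        muzip_cons p v vs' j js'
      have hmuv : (muzip p vs' js') v = 0 := muzip_apply_eq_zero p vs' js' v hvvs'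
      have key : phi (muzip p (v :: vs') (j :: js')) w
          (applyQ Q (j :: js') (xprod x ((v :: vs') ++ [w])))
          = (-1 : ZMod p) ^ js'.length •
            phi (muzip p vs' js') w (applyQ Q js' (xprod x (vs' ++ [w]))) := by
        rw [show ((v :: vs') ++ [w]) = v :: (vs' ++ [w]) from rfl, xprod_cons,
          applyQ_x_mul x y ε Q hx hy hε hQx hQy hQmul, map_add, map_sum,
          show (j :: js').length = js'.length + 1 from rfl, Finset.sum_range_succ']
        have hkill : ∀ t ∈ Finset.range js'.length,
            phi (muzip p (v :: vs') (j :: js')) w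
              (((-1 : ZMod p) ^ (js'.length + 1 - 1 - (t + 1))) •
                ((y v) ^ (p ^ ((j :: js').getD (t + 1) 0)) *
                  applyQ Q ((j :: js').eraseIdx (t + 1)) (xprod x (vs' ++ [w])))) = 0 := by
          intro t ht
          have ht' : t < js'.length := Finset.mem_range.mp ht
          have hg2 : (j :: js').getD (t + 1) 0 = js'.getD t 0 := rfl
          have hg3 : (j :: js').eraseIdx (t + 1) = j :: js'.eraseIdx t := rfl
          have hlen2 : (j :: js'.eraseIdx t).length = js'.length := by
            have := List.length_eraseIdx_add_one ht'
            simp only [List.length_cons]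
            omega
          have hgoodt : applyQ Q (j :: js'.eraseIdx t) (xprod x (vs' ++ [w]))
              ∈ good x (vs' ++ [w]) 1 := by
            have := applyQ_xprod_mem_good x y ε Q hp hx hy hε hQx hQy hQmul (vs' ++ [w])
              (j :: js'.eraseIdx t) (by omega)
            rwa [hlw, hlen2, Nat.add_sub_cancel_left] at this
          rw [map_smul, hg2, hg3]
          rw [phi_ypow_mul_good_eq_zero x y hx hy _ w v _ (vs' ++ [w]) hndc.1 ?_ _ hgoodt,
            smul_zero]
          · rw [hmu, Finsupp.add_apply, hmuv, add_zero, Finsupp.single_eq_same]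
            intro hcon
            have hmem : js'.getD t 0 ∈ js' := by
              rw [List.getD_eq_getElem _ _ ht']
              exact List.getElem_mem _
            exact hjnd.1 ((Nat.pow_right_injective hp hcon) ▸ hmem)
        rw [Finset.sum_congr rfl hkill, Finset.sum_const_zero, zero_add]
        have hg0 : (j :: js').getD 0 0 = j := rfl
        have he0 : (j :: js').eraseIdx 0 = js' := rfl
        rw [map_smul, map_smul, hg0, he0, hmu]
        rw [phi_ypow_mul_good_peel x y hx hy (muzip p vs' js') w v (p ^ j) (vs' ++ [w]) _
          hgood1]
        rw [phi_x_mul_good_eq_zero x hx _ w v hvw (vs' ++ [w]) _ hgood0, smul_zero, add_zero]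
        norm_num
      rw [key]
      have hih := ih vs' w hlen hjnd.2 hndc.2
      rcases Nat.even_or_odd js'.length with hev | hod
      · rw [hev.neg_one_pow, one_smul]
        exact hih
      · rw [hod.neg_one_pow, neg_smul, one_smul]
        rcases hih with h | h
        · right; rw [h]
        · left; rw [h, neg_neg]

lemma xprod_def (l : List (Fin n)) : xprod x l = (l.map x).prod := rfl

lemma zipWith_ofFn_aux {α β γ : Type*} (f : α → β → γ) :
    ∀ (m : ℕ) (a : Fin m → α) (b : Fin m → β),
      List.zipWith f (List.ofFn a) (List.ofFn b) = List.ofFn (fun k => f (a k) (b k)) := by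
  intro m
  induction m with
  | zero => intro a b; simp
  | succ m ih => intro a b; simp [List.ofFn_succ, ih]

end MilnorQAux

open MilnorQAux

/-- In `A = F_p[y₁,…,yₙ] ⊗ Λ(x₁,…,xₙ)` with the Milnor operations `Q_j`
(graded derivations with `Q_j xᵢ = yᵢ^{p^j}`, `Q_j yᵢ = 0`), for `2 ≤ s ≤ n` and
`0 < i₁ < ⋯ < i_{s-2}` the element `Q_{i₁} ∘ ⋯ ∘ Q_{i_{s-2}} ∘ Q₀ (x₁⋯x_s)` is
nonzero: its `x_s`-component contains the monomial
`y₁^{p^{i₁}} ⋯ y_{s-2}^{p^{i_{s-2}}} · y_{s-1}` with coefficient `±1`. -/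
theorem milnor_iterated_Q_on_product_ne_zero
    (p n : ℕ) (hp : p.Prime) (hodd : Odd p) (hn : 2 ≤ n)
    (x y : Fin n → PolyTensorExtN p n)
    (hx : ∀ i, x i = 1 ⊗ₜ ExteriorAlgebra.ι (ZMod p) (Pi.single i (1 : ZMod p)))
    (hy : ∀ i, y i = (MvPolynomial.X i) ⊗ₜ 1)
    (ε : PolyTensorExtN p n →ₐ[ZMod p] PolyTensorExtN p n)
    (hε : ε = Algebra.TensorProduct.map (AlgHom.id (ZMod p) (MvPolynomial (Fin n) (ZMod p)))
        (ExteriorAlgebra.map (-(LinearMap.id (R := ZMod p) (M := Fin n → ZMod p)))))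
    (Q : ℕ → (PolyTensorExtN p n →ₗ[ZMod p] PolyTensorExtN p n))
    (hQx : ∀ j i, Q j (x i) = (y i) ^ (p ^ j))
    (hQy : ∀ j i, Q j (y i) = 0)
    (hQmul : ∀ j, ∀ a b, Q j (a * b) = Q j a * b + ε a * Q j b) :
    ∀ (s : ℕ) (hs2 : 2 ≤ s) (hsn : s ≤ n) (idx : Fin (s - 2) → ℕ),
      StrictMono idx → (∀ k, 0 < idx k) →
      ((List.ofFn (fun k : Fin (s - 2) => Q (idx k))).prod * Q 0)
          ((List.ofFn (fun k : Fin s => x (Fin.castLE hsn k))).prod) ≠ 0 ∧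
      (MvPolynomial.coeff
          ((∑ k : Fin (s - 2),
              Finsupp.single (Fin.castLE (by omega) k : Fin n) (p ^ idx k)) +
            Finsupp.single (⟨s - 2, by omega⟩ : Fin n) 1)
          ((TensorProduct.rid (ZMod p) (MvPolynomial (Fin n) (ZMod p)))
            ((TensorProduct.map LinearMap.id
                (LinearMap.proj (⟨s - 1, by omega⟩ : Fin n)))
              ((TensorProduct.map LinearMap.id ExteriorAlgebra.ιInv)
                (((List.ofFn (fun k : Fin (s - 2) => Q (idx k))).prod * Q 0)
                  ((List.ofFn (fun k : Fin s => x (Fin.castLE hsn k))).prod)))))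
          = 1 ∨
        MvPolynomial.coeff
          ((∑ k : Fin (s - 2),
              Finsupp.single (Fin.castLE (by omega) k : Fin n) (p ^ idx k)) +
            Finsupp.single (⟨s - 2, by omega⟩ : Fin n) 1)
          ((TensorProduct.rid (ZMod p) (MvPolynomial (Fin n) (ZMod p)))
            ((TensorProduct.map LinearMap.id
                (LinearMap.proj (⟨s - 1, by omega⟩ : Fin n)))
              ((TensorProduct.map LinearMap.id ExteriorAlgebra.ιInv)
                (((List.ofFn (fun k : Fin (s - 2) => Q (idx k))).prod * Q 0)
                  ((List.ofFn (fun k : Fin s => x (Fin.castLE hsn k))).prod)))))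
          = -1) := by
  intro s hs2 hsn idx hmono hpos
  obtain ⟨m, rfl⟩ : ∃ m, s = m + 2 := ⟨s - 2, by omega⟩
  haveI : Fact p.Prime := ⟨hp⟩
  have hp2 : 1 < p := hp.one_lt
  set js : List ℕ := List.ofFn (fun k : Fin m => idx k) ++ [0] with hjs
  set vs : List (Fin n) := List.ofFn (fun k : Fin (m + 1) => Fin.castLE hsn k.castSucc)
    with hvs
  set w : Fin n := Fin.castLE hsn (Fin.last (m + 1)) with hwdef
  have hlen : vs.length = js.length := by simp [hvs, hjs]
  have hndjs : js.Nodup := by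
    rw [hjs, List.nodup_append]
    refine ⟨List.nodup_ofFn.mpr (fun a b hab => hmono.injective hab),
      List.nodup_singleton 0, ?_⟩
    intro a ha b hb hab
    rw [List.mem_singleton, ← hab] at hb
    rw [List.mem_ofFn] at ha
    obtain ⟨k, hk⟩ := ha
    subst hb
    exact absurd (hk ▸ hpos k) (by simp)
  have hvsw : vs ++ [w] = List.ofFn (fun k : Fin (m + 2) => Fin.castLE hsn k) := by
    rw [List.ofFn_succ' (fun k : Fin (m + 2) => Fin.castLE hsn k), List.concat_eq_append]
  have hndvs : (vs ++ [w]).Nodup := by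
    rw [hvsw]
    exact List.nodup_ofFn.mpr (Fin.castLE_injective hsn)
  have hmain := main_lemma x y ε Q hp2 hx hy hε hQx hQy hQmul js vs w hlen hndjs hndvs
  have hE : applyQ Q js (xprod x (vs ++ [w])) =
      ((List.ofFn (fun k : Fin (m + 2 - 2) => Q (idx k))).prod * Q 0)
        ((List.ofFn (fun k : Fin (m + 2) => x (Fin.castLE hsn k))).prod) := by
    rw [hvsw, xprod_def, List.map_ofFn]
    rw [applyQ, hjs, List.map_append, List.map_ofFn, List.prod_append]
    rfl
  rw [hE] at hmain
  have hμt : muzip p vs js =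
      (∑ k : Fin (m + 2 - 2),
        Finsupp.single (Fin.castLE (by omega : m + 2 - 2 ≤ n) k : Fin n) (p ^ idx k)) +
      Finsupp.single (⟨m + 2 - 2, by omega⟩ : Fin n) 1 := by
    have hvs' : vs = List.ofFn (fun k : Fin m => Fin.castLE hsn k.castSucc.castSucc) ++
        [Fin.castLE hsn (Fin.last m).castSucc] := by
      rw [hvs, List.ofFn_succ' (fun k : Fin (m + 1) => Fin.castLE hsn k.castSucc),
        List.concat_eq_append]
    rw [muzip, hvs', hjs, List.zipWith_append (by simp), List.sum_append,
      zipWith_ofFn_aux, List.sum_ofFn]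
    rw [show List.zipWith (fun (v : Fin n) (j : ℕ) => Finsupp.single v (p ^ j))
        [Fin.castLE hsn (Fin.last m).castSucc] [0]
        = [Finsupp.single (Fin.castLE hsn (Fin.last m).castSucc) (p ^ 0)] from rfl]
    rw [List.sum_cons, List.sum_nil, add_zero, pow_zero]
    rfl
  rw [hμt] at hmain
  have hw2 : w = (⟨m + 2 - 1, by omega⟩ : Fin n) := by
    rw [hwdef]
    exact Fin.ext rfl
  rw [hw2] at hmain
  constructor
  · intro h0
    rw [h0, map_zero] at hmain
    rcases hmain with h | h
    · exact one_ne_zero (α := ZMod p) h.symm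
    · exact one_ne_zero (α := ZMod p) (neg_eq_zero.mp h.symm)
  · exact hmain
end

section
/- Let p be a prime and consider in F_p[y₁, y₂, y₃, y₄] the elements a = y₁^p y₂ − y₁ y₂^p + y₃^p y₄ − y₃ y₄^p and b = y₁^{p²} y₂ − y₁ y₂^{p²} + y₃^{p²} y₄ − y₃ y₄^{p²}. Then (a, b) is a regular sequence in F_p[y₁, y₂, y₃, y₄]. -/
open MvPolynomial

namespace RegSeqAux

open Finsupp

variable {R : Type*} [CommRing R]

def wt (w : Fin 4 → ℕ) (d : Fin 4 →₀ ℕ) : ℕ := ∑ i, w i * d i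

lemma wt_add (w : Fin 4 → ℕ) (u v : Fin 4 →₀ ℕ) : wt w (u + v) = wt w u + wt w v := by
  simp [wt, mul_add, Finset.sum_add_distrib]

lemma wt_mono {w : Fin 4 → ℕ} {u v : Fin 4 →₀ ℕ} (h : u ≤ v) : wt w u ≤ wt w v := by
  obtain ⟨c, rfl⟩ := exists_add_of_le h
  rw [wt_add]; exact Nat.le_add_right _ _

lemma mem_support_mul {f g : MvPolynomial (Fin 4) R} {e : Fin 4 →₀ ℕ}
    (h : e ∈ (f * g).support) : ∃ u ∈ f.support, ∃ v ∈ g.support, u + v = e := by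
  classical
  by_contra hc
  push_neg at hc
  rw [MvPolynomial.mem_support_iff] at h
  apply h
  rw [coeff_mul]
  apply Finset.sum_eq_zero
  intro uv huv
  rw [Finset.HasAntidiagonal.mem_antidiagonal] at huv
  by_cases h1 : uv.1 ∈ f.support
  · by_cases h2 : uv.2 ∈ g.support
    · exact absurd huv (hc uv.1 h1 uv.2 h2)
    · rw [MvPolynomial.notMem_support_iff] at h2; rw [h2, mul_zero]
  · rw [MvPolynomial.notMem_support_iff] at h1; rw [h1, zero_mul]

lemma coeff_mul_top {w : Fin 4 → ℕ} {f g : MvPolynomial (Fin 4) R} {s t : ℕ} {M d : Fin 4 →₀ ℕ}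
    (hf : ∀ u ∈ f.support, wt w u ≤ s)
    (hfM : ∀ u ∈ f.support, wt w u = s → u = M)
    (hM : wt w M = s)
    (hg : ∀ v ∈ g.support, wt w v ≤ t)
    (hd : wt w d = t) :
    coeff (M + d) (f * g) = coeff M f * coeff d g := by
  rw [coeff_mul]
  apply Finset.sum_eq_single (M, d)
  · intro uv hmem hne
    rw [Finset.HasAntidiagonal.mem_antidiagonal] at hmem
    by_cases h1 : coeff uv.1 f = 0
    · rw [h1, zero_mul]
    by_cases h2 : coeff uv.2 g = 0
    · rw [h2, mul_zero]
    exfalso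
    have hu := MvPolynomial.mem_support_iff.mpr h1
    have hv := MvPolynomial.mem_support_iff.mpr h2
    have hsum : wt w uv.1 + wt w uv.2 = s + t := by
      rw [← wt_add, hmem, wt_add, hM, hd]
    have hws : wt w uv.1 = s := le_antisymm (hf _ hu) (by
      have := hg _ hv; omega)
    have h1M : uv.1 = M := hfM _ hu hws
    have h2d : uv.2 = d := by
      have h' : M + uv.2 = M + d := h1M ▸ hmem
      exact add_left_cancel h'
    exact hne (Prod.ext h1M h2d)
  · intro hnot
    exfalso; apply hnot
    rw [Finset.HasAntidiagonal.mem_antidiagonal]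

def ww (p : ℕ) : Fin 4 → ℕ := ![p+2, p+3, p+4, 1]

noncomputable def M01 (e f : ℕ) : Fin 4 →₀ ℕ := Finsupp.single 0 e + Finsupp.single 1 f
noncomputable def M23 (e f : ℕ) : Fin 4 →₀ ℕ := Finsupp.single 2 e + Finsupp.single 3 f

@[simp] lemma M01_apply0 (e f : ℕ) : M01 e f 0 = e := by simp [M01]
@[simp] lemma M01_apply1 (e f : ℕ) : M01 e f 1 = f := by simp [M01, Finsupp.single_apply]
@[simp] lemma M01_apply2 (e f : ℕ) : M01 e f 2 = 0 := by simp [M01, Finsupp.single_apply]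
@[simp] lemma M01_apply3 (e f : ℕ) : M01 e f 3 = 0 := by simp [M01, Finsupp.single_apply]
@[simp] lemma M23_apply0 (e f : ℕ) : M23 e f 0 = 0 := by simp [M23, Finsupp.single_apply]
@[simp] lemma M23_apply1 (e f : ℕ) : M23 e f 1 = 0 := by simp [M23, Finsupp.single_apply]
@[simp] lemma M23_apply2 (e f : ℕ) : M23 e f 2 = e := by simp [M23, Finsupp.single_apply]
@[simp] lemma M23_apply3 (e f : ℕ) : M23 e f 3 = f := by simp [M23, Finsupp.single_apply]

lemma wt_apply (w : Fin 4 → ℕ) (d : Fin 4 →₀ ℕ) :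
    wt w d = w 0 * d 0 + w 1 * d 1 + w 2 * d 2 + w 3 * d 3 := by
  simp [wt, Fin.sum_univ_four]

lemma wt_M01 (p e f : ℕ) : wt (ww p) (M01 e f) = (p+2)*e + (p+3)*f := by
  simp [wt_apply, ww]
lemma wt_M23 (p e f : ℕ) : wt (ww p) (M23 e f) = (p+4)*e + f := by
  simp [wt_apply, ww]

lemma repr_poly (r : ℕ) :
    (X 0 ^ r * X 1 - X 0 * X 1 ^ r + X 2 ^ r * X 3 - X 2 * X 3 ^ r : MvPolynomial (Fin 4) R)
      = monomial (M01 r 1) 1 - monomial (M01 1 r) 1 + monomial (M23 r 1) 1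
        - monomial (M23 1 r) 1 := by
  have hX : ∀ i : Fin 4, (X i : MvPolynomial (Fin 4) R) = monomial (Finsupp.single i 1) 1 := by
    intro i; rfl
  simp only [X_pow_eq_monomial]
  rw [hX 0, hX 1, hX 2, hX 3, monomial_mul, monomial_mul, monomial_mul, monomial_mul]
  simp [M01, M23]

lemma coeff_repr (r : ℕ) (u : Fin 4 →₀ ℕ) :
    coeff u (monomial (M01 r 1) 1 - monomial (M01 1 r) 1 + monomial (M23 r 1) 1
        - monomial (M23 1 r) (1 : R))
      = (if M01 r 1 = u then 1 else 0) - (if M01 1 r = u then 1 else 0)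
        + (if M23 r 1 = u then 1 else 0) - (if M23 1 r = u then 1 else 0) := by
  classical
  simp [coeff_sub, coeff_add, coeff_monomial]

lemma ne_of_apply_ne {u v : Fin 4 →₀ ℕ} (i : Fin 4) (h : u i ≠ v i) : u ≠ v :=
  fun hc => h (by rw [hc])


lemma key {w : Fin 4 → ℕ} {Ma Mb : Fin 4 →₀ ℕ} {ma mb : ℕ}
    {a b : MvPolynomial (Fin 4) R}
    (hwMa : wt w Ma = ma) (hwMb : wt w Mb = mb)
    (ha_le : ∀ u ∈ a.support, wt w u ≤ ma)
    (ha_eq : ∀ u ∈ a.support, wt w u = ma → u = Ma)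
    (hb_le : ∀ u ∈ b.support, wt w u ≤ mb)
    (hb_eq : ∀ u ∈ b.support, wt w u = mb → u = Mb)
    (hca : coeff Ma a = -1) (hcb : coeff Mb b = 1)
    (ha' : ∀ u, coeff u (a + monomial Ma 1) ≠ 0 → wt w u < ma)
    (hcop : ∀ v d : Fin 4 →₀ ℕ, Ma + v = Mb + d → Ma ≤ d) :
    ∀ x : MvPolynomial (Fin 4) R, a ∣ b * x → a ∣ x := by
  classical
  suffices H : ∀ N : ℕ, ∀ x : MvPolynomial (Fin 4) R,
      (∀ d ∈ x.support, wt w d < N) → a ∣ b * x → a ∣ x by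
    intro x hx
    exact H (x.support.sup (wt w) + 1) x
      (fun d hd => Nat.lt_succ_of_le (Finset.le_sup hd)) hx
  intro N
  induction N using Nat.strong_induction_on with
  | _ N IH =>
    intro x hxN hdvd
    by_cases hx0 : x = 0
    · exact hx0 ▸ dvd_zero a
    obtain ⟨y, hy⟩ := hdvd
    set n : ℕ := x.support.sup (wt w) with hndef
    obtain ⟨dmax, hdmax_mem, hdmax⟩ :=
      Finset.exists_mem_eq_sup x.support
        (Finset.nonempty_iff_ne_empty.mpr
          (fun h => hx0 (MvPolynomial.support_eq_empty.mp h))) (wt w)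
    have hx_le : ∀ d ∈ x.support, wt w d ≤ n := fun d hd => Finset.le_sup hd
    -- membership of Mb + dmax in support of b*x = a*y
    have hco1 : coeff (Mb + dmax) (b * x) = coeff dmax x := by
      rw [coeff_mul_top hb_le hb_eq hwMb hx_le hdmax.symm, hcb, one_mul]
    have hmem1 : Mb + dmax ∈ (a * y).support := by
      rw [← hy]
      rw [MvPolynomial.mem_support_iff, hco1]
      exact MvPolynomial.mem_support_iff.mp hdmax_mem
    have hy0 : y ≠ 0 := by
      rintro rfl
      rw [mul_zero] at hmem1
      simp at hmem1
    set r : ℕ := y.support.sup (wt w) with hrdef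
    obtain ⟨dy, hdy_mem, hdy⟩ :=
      Finset.exists_mem_eq_sup y.support
        (Finset.nonempty_iff_ne_empty.mpr
          (fun h => hy0 (MvPolynomial.support_eq_empty.mp h))) (wt w)
    have hy_le : ∀ d ∈ y.support, wt w d ≤ r := fun d hd => Finset.le_sup hd
    have hco2 : coeff (Ma + dy) (a * y) = -coeff dy y := by
      rw [coeff_mul_top ha_le ha_eq hwMa hy_le hdy.symm, hca, neg_one_mul]
    have hmem2 : Ma + dy ∈ (b * x).support := by
      rw [hy]
      rw [MvPolynomial.mem_support_iff, hco2]
      exact neg_ne_zero.mpr (MvPolynomial.mem_support_iff.mp hdy_mem)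
    -- degree equality ma + r = mb + n
    have hle1 : mb + n ≤ ma + r := by
      obtain ⟨u, hu, v, hv, huv⟩ := mem_support_mul hmem1
      have h1 : wt w u + wt w v = mb + n := by
        rw [← wt_add, huv, wt_add, hwMb, ← hdmax]
      have := ha_le u hu
      have := hy_le v hv
      omega
    have hle2 : ma + r ≤ mb + n := by
      obtain ⟨u, hu, v, hv, huv⟩ := mem_support_mul hmem2
      have h1 : wt w u + wt w v = ma + r := by
        rw [← wt_add, huv, wt_add, hwMa, ← hdy]
      have := hb_le u hu
      have := hx_le v hv
      omega
    have heq : ma + r = mb + n := le_antisymm hle2 hle1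
    -- every top-weight exponent of x is divisible by Ma
    have htop : ∀ d ∈ x.support, wt w d = n → Ma ≤ d := by
      intro d hd hdn
      have hco : coeff (Mb + d) (b * x) = coeff d x := by
        rw [coeff_mul_top hb_le hb_eq hwMb hx_le hdn, hcb, one_mul]
      have hmem : Mb + d ∈ (a * y).support := by
        rw [← hy, MvPolynomial.mem_support_iff, hco]
        exact MvPolynomial.mem_support_iff.mp hd
      obtain ⟨u, hu, v, hv, huv⟩ := mem_support_mul hmem
      have hsum : wt w u + wt w v = mb + n := by
        rw [← wt_add, huv, wt_add, hwMb, hdn]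
      have hwu : wt w u = ma := by
        have := ha_le u hu
        have := hy_le v hv
        omega
      have huMa : u = Ma := ha_eq u hu hwu
      subst huMa
      exact hcop v d huv
    -- construct q
    set S : Finset (Fin 4 →₀ ℕ) := x.support.filter (fun d => wt w d = n) with hSdef
    have hS_mem : ∀ d ∈ S, d ∈ x.support ∧ wt w d = n := by
      intro d hd
      rw [hSdef, Finset.mem_filter] at hd
      exact hd
    set q : MvPolynomial (Fin 4) R :=
      ∑ d ∈ S, monomial (d - Ma) (coeff d x) with hqdef
    have hq : monomial Ma (1 : R) * q = ∑ d ∈ S, monomial d (coeff d x) := by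
      rw [hqdef, Finset.mul_sum]
      refine Finset.sum_congr rfl (fun d hd => ?_)
      rw [monomial_mul, one_mul,
        add_tsub_cancel_of_le (htop d (hS_mem d hd).1 (hS_mem d hd).2)]
    have hcoeffT : ∀ d' : Fin 4 →₀ ℕ,
        coeff d' (monomial Ma (1 : R) * q) = if d' ∈ S then coeff d' x else 0 := by
      intro d'
      rw [hq, coeff_sum]
      simp only [coeff_monomial]
      rw [Finset.sum_ite_eq' S d' (fun d => coeff d x)]
    have hq_supp : ∀ v ∈ q.support, ∃ d ∈ S, d - Ma = v := by
      intro v hv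
      rw [MvPolynomial.mem_support_iff, hqdef, coeff_sum] at hv
      obtain ⟨d, hd, hne⟩ := Finset.exists_ne_zero_of_sum_ne_zero hv
      rw [coeff_monomial] at hne
      by_cases h : d - Ma = v
      · exact ⟨d, hd, h⟩
      · rw [if_neg h] at hne; exact absurd rfl hne
    -- the new polynomial x + a*q has all weights < n
    have hx1 : ∀ d' ∈ (x + a * q).support, wt w d' < n := by
      intro d' hd'
      have hc : coeff d' (x + a * q) ≠ 0 := MvPolynomial.mem_support_iff.mp hd'
      have hsplit : x + a * q
          = (x - monomial Ma 1 * q) + (a + monomial Ma 1) * q := by ring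
      rw [hsplit, coeff_add] at hc
      by_cases hc1 : coeff d' (x - monomial Ma 1 * q) ≠ 0
      · rw [coeff_sub, hcoeffT d'] at hc1
        by_cases hwn : wt w d' = n
        · exfalso
          apply hc1
          by_cases hxs : d' ∈ x.support
          · rw [if_pos (by rw [hSdef, Finset.mem_filter]; exact ⟨hxs, hwn⟩), sub_self]
          · rw [if_neg (by rw [hSdef, Finset.mem_filter]; tauto),
              MvPolynomial.notMem_support_iff.mp hxs, sub_zero]
        · have hxs : d' ∈ x.support := by
            by_contra hxs
            apply hc1
            rw [if_neg (by rw [hSdef, Finset.mem_filter]; tauto),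
              MvPolynomial.notMem_support_iff.mp hxs, sub_zero]
          exact lt_of_le_of_ne (hx_le d' hxs) hwn
      · push_neg at hc1
        rw [hc1, zero_add] at hc
        have hmem' : d' ∈ ((a + monomial Ma 1) * q).support :=
          MvPolynomial.mem_support_iff.mpr hc
        obtain ⟨u, hu, v, hv, huv⟩ := mem_support_mul hmem'
        have hwu : wt w u < ma := ha' u (MvPolynomial.mem_support_iff.mp hu)
        obtain ⟨d, hd, hdv⟩ := hq_supp v hv
        obtain ⟨hdx, hdn⟩ := hS_mem d hd
        have hdd : Ma + v = d := by
          rw [← hdv]; exact add_tsub_cancel_of_le (htop d hdx hdn)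
        have hwv : ma + wt w v = n := by
          rw [← hdn, ← hdd, wt_add, hwMa]
        calc wt w d' = wt w u + wt w v := by rw [← huv, wt_add]
          _ < ma + wt w v := by omega
          _ = n := hwv
    -- apply induction hypothesis
    have hnN : n < N := by
      have := hxN dmax hdmax_mem
      omega
    have hbdvd : a ∣ b * (x + a * q) := by
      refine ⟨y + b * q, ?_⟩
      rw [mul_add, hy]
      ring
    have hdvd1 : a ∣ x + a * q := IH n hnN (x + a * q) hx1 hbdvd
    have hxeq : x = (x + a * q) - a * q := by ring
    rw [hxeq]
    exact dvd_sub hdvd1 (Dvd.intro q rfl)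

lemma main_dvd (p : ℕ) (hp : p.Prime)
    (a b : MvPolynomial (Fin 4) (ZMod p))
    (ha : a = X 0 ^ p * X 1 - X 0 * X 1 ^ p + X 2 ^ p * X 3 - X 2 * X 3 ^ p)
    (hb : b = X 0 ^ (p ^ 2) * X 1 - X 0 * X 1 ^ (p ^ 2)
        + X 2 ^ (p ^ 2) * X 3 - X 2 * X 3 ^ (p ^ 2)) :
    ∀ x : MvPolynomial (Fin 4) (ZMod p), a ∣ b * x → a ∣ x := by
  classical
  haveI := Fact.mk hp
  have hp2 : 2 ≤ p := hp.two_le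
  have hra : a = monomial (M01 p 1) 1 - monomial (M01 1 p) 1 + monomial (M23 p 1) 1
      - monomial (M23 1 p) 1 := by rw [ha, repr_poly]
  have hrb : b = monomial (M01 (p^2) 1) 1 - monomial (M01 1 (p^2)) 1 + monomial (M23 (p^2) 1) 1
      - monomial (M23 1 (p^2)) 1 := by rw [hb, repr_poly]
  have ha_cases : ∀ u ∈ a.support,
      u = M01 p 1 ∨ u = M01 1 p ∨ u = M23 p 1 ∨ u = M23 1 p := by
    intro u hu
    by_contra hcon
    push_neg at hcon
    obtain ⟨h1, h2, h3, h4⟩ := hcon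
    apply MvPolynomial.mem_support_iff.mp hu
    rw [hra, coeff_repr, if_neg (Ne.symm h1), if_neg (Ne.symm h2), if_neg (Ne.symm h3),
      if_neg (Ne.symm h4)]
    ring
  have hb_cases : ∀ u ∈ b.support,
      u = M01 (p^2) 1 ∨ u = M01 1 (p^2) ∨ u = M23 (p^2) 1 ∨ u = M23 1 (p^2) := by
    intro u hu
    by_contra hcon
    push_neg at hcon
    obtain ⟨h1, h2, h3, h4⟩ := hcon
    apply MvPolynomial.mem_support_iff.mp hu
    rw [hrb, coeff_repr, if_neg (Ne.symm h1), if_neg (Ne.symm h2), if_neg (Ne.symm h3),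
      if_neg (Ne.symm h4)]
    ring
  have ha_le : ∀ u ∈ a.support, wt (ww p) u ≤ p*p + 4*p + 2 := by
    intro u hu
    rcases ha_cases u hu with h | h | h | h <;> subst h <;>
      first
        | (rw [wt_M01]; nlinarith)
        | (rw [wt_M23]; nlinarith)
  have ha_eq : ∀ u ∈ a.support, wt (ww p) u = p*p + 4*p + 2 → u = M01 1 p := by
    intro u hu hwu
    rcases ha_cases u hu with h | h | h | h <;> subst h
    · rw [wt_M01] at hwu; exfalso; nlinarith
    · rfl
    · rw [wt_M23] at hwu; exfalso; nlinarith
    · rw [wt_M23] at hwu; exfalso; nlinarith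
  have hb_le : ∀ u ∈ b.support, wt (ww p) u ≤ p*p*p + 4*(p*p) + 1 := by
    intro u hu
    rcases hb_cases u hu with h | h | h | h <;> subst h <;>
      first
        | (rw [wt_M01]; nlinarith)
        | (rw [wt_M23]; nlinarith)
  have hb_eq : ∀ u ∈ b.support, wt (ww p) u = p*p*p + 4*(p*p) + 1 → u = M23 (p^2) 1 := by
    intro u hu hwu
    rcases hb_cases u hu with h | h | h | h <;> subst h
    · rw [wt_M01] at hwu; exfalso; nlinarith
    · rw [wt_M01] at hwu; exfalso; nlinarith
    · rfl
    · rw [wt_M23] at hwu; exfalso; nlinarith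
  have hca : coeff (M01 1 p) a = -1 := by
    rw [hra, coeff_repr,
      if_neg (ne_of_apply_ne 0 (by simp; omega) : M01 p 1 ≠ M01 1 p),
      if_pos rfl,
      if_neg (ne_of_apply_ne 0 (by simp) : M23 p 1 ≠ M01 1 p),
      if_neg (ne_of_apply_ne 0 (by simp) : M23 1 p ≠ M01 1 p)]
    ring
  have hcb : coeff (M23 (p^2) 1) b = 1 := by
    rw [hrb, coeff_repr,
      if_neg (ne_of_apply_ne 2 (by simp; nlinarith) : M01 (p^2) 1 ≠ M23 (p^2) 1),
      if_neg (ne_of_apply_ne 2 (by simp; nlinarith) : M01 1 (p^2) ≠ M23 (p^2) 1),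
      if_pos rfl,
      if_neg (ne_of_apply_ne 2 (by simp; nlinarith) : M23 1 (p^2) ≠ M23 (p^2) 1)]
    ring
  have ha' : ∀ u, coeff u (a + monomial (M01 1 p) 1) ≠ 0 → wt (ww p) u < p*p + 4*p + 2 := by
    intro u hu
    rw [coeff_add, hra, coeff_repr, coeff_monomial] at hu
    have hcases : u = M01 p 1 ∨ u = M23 p 1 ∨ u = M23 1 p := by
      by_contra hcon
      push_neg at hcon
      obtain ⟨h1, h3, h4⟩ := hcon
      apply hu
      by_cases h2 : M01 1 p = u
      · simp [if_neg (Ne.symm h1), if_neg (Ne.symm h3), if_neg (Ne.symm h4), if_pos h2]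
      · simp [if_neg (Ne.symm h1), if_neg (Ne.symm h3), if_neg (Ne.symm h4), if_neg h2]
    rcases hcases with h | h | h <;> subst h
    · rw [wt_M01]; nlinarith
    · rw [wt_M23]; nlinarith
    · rw [wt_M23]; nlinarith
  have hcop : ∀ v d : Fin 4 →₀ ℕ, M01 1 p + v = M23 (p^2) 1 + d → M01 1 p ≤ d := by
    intro v d h
    rw [Finsupp.le_def]
    intro i
    have hcoord := DFunLike.congr_fun h i
    rw [Finsupp.add_apply, Finsupp.add_apply] at hcoord
    fin_cases i <;>
      simp [M01, M23, Finsupp.single_apply] at hcoord ⊢ <;> omega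
  have hwMa : wt (ww p) (M01 1 p) = p*p + 4*p + 2 := by rw [wt_M01]; ring
  have hwMb : wt (ww p) (M23 (p^2) 1) = p*p*p + 4*(p*p) + 1 := by rw [wt_M23]; ring
  exact key hwMa hwMb ha_le ha_eq hb_le hb_eq hca hcb ha' hcop

lemma a_ne_zero (p : ℕ) (hp : p.Prime)
    (a : MvPolynomial (Fin 4) (ZMod p))
    (ha : a = X 0 ^ p * X 1 - X 0 * X 1 ^ p + X 2 ^ p * X 3 - X 2 * X 3 ^ p) :
    a ≠ 0 := by
  classical
  haveI := Fact.mk hp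
  have hp2 : 2 ≤ p := hp.two_le
  have hra : a = monomial (M01 p 1) 1 - monomial (M01 1 p) 1 + monomial (M23 p 1) 1
      - monomial (M23 1 p) 1 := by rw [ha, repr_poly]
  have hca : coeff (M01 1 p) a = -1 := by
    rw [hra, coeff_repr,
      if_neg (ne_of_apply_ne 0 (by simp; omega) : M01 p 1 ≠ M01 1 p),
      if_pos rfl,
      if_neg (ne_of_apply_ne 0 (by simp) : M23 p 1 ≠ M01 1 p),
      if_neg (ne_of_apply_ne 0 (by simp) : M23 1 p ≠ M01 1 p)]
    ring
  intro h0
  rw [h0] at hca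
  simp at hca

end RegSeqAux

/-- In `F_p[y₁,y₂,y₃,y₄]`, the pair
`a = y₁ᵖy₂ − y₁y₂ᵖ + y₃ᵖy₄ − y₃y₄ᵖ`, `b = y₁^{p²}y₂ − y₁y₂^{p²} + y₃^{p²}y₄ − y₃y₄^{p²}`
is a regular sequence: `a` is a nonzerodivisor and `b` is a nonzerodivisor modulo `(a)`. -/
theorem regular_sequence_Q1Q0f_Q2Q0f
    (p : ℕ) (hp : p.Prime)
    (a b : MvPolynomial (Fin 4) (ZMod p))
    (ha : a = X 0 ^ p * X 1 - X 0 * X 1 ^ p + X 2 ^ p * X 3 - X 2 * X 3 ^ p)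
    (hb : b = X 0 ^ (p ^ 2) * X 1 - X 0 * X 1 ^ (p ^ 2)
        + X 2 ^ (p ^ 2) * X 3 - X 2 * X 3 ^ (p ^ 2)) :
    (∀ x : MvPolynomial (Fin 4) (ZMod p), a * x = 0 → x = 0) ∧
    (∀ x : MvPolynomial (Fin 4) (ZMod p),
      b * x ∈ Ideal.span {a} → x ∈ Ideal.span {a}) := by
  haveI := Fact.mk hp
  have ha0 : a ≠ 0 := RegSeqAux.a_ne_zero p hp a ha
  constructor
  · intro x hx
    rcases mul_eq_zero.mp hx with h | h
    · exact absurd h ha0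
    · exact h
  · intro x hx
    rw [Ideal.mem_span_singleton] at hx ⊢
    exact RegSeqAux.main_dvd p hp a b ha hb x hx
end
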